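/- There exists a finite directed graph E (namely one vertex and one loop) and a divisibility sequence n_k = 2^k such that the map ι : M(lim← E^{<n_k}) → lim← M(E^{<n_k}) sending m to the sequence of measures ι(m)_k({τ}) = m(Z(τ,k)) is not surjective: there is a compatible sequence of signed measures (m_k) with m_k({v}) = 2^k unbounded, hence not in the range of ι. -/

import Mathlib

/-- A directed graph: vertices, edges, range and source maps. -/
structure DGraph where
  V : Type
  E : Type
  r : E → V
  s : E → V

namespace DGraph

variable {G : DGraph}

/-- A path in a directed graph: a word of composable edges together with a source vertex
(so that length-zero paths are vertices). -/
structure Path (G : DGraph) where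
  src : G.V
  edges : List G.E
  chain : List.Chain' (fun a b => G.s a = G.r b) edges
  srcEq : ∀ a ∈ edges.getLast?, G.s a = src

/-- The range of a path. -/
def Path.rng (p : G.Path) : G.V := p.edges.head?.elim p.src G.r

/-- The length of a path. -/
def Path.length (p : G.Path) : ℕ := p.edges.length

/-- The length-zero path at a vertex. -/
def Path.nil (G : DGraph) (v : G.V) : G.Path :=
  ⟨v, [], List.isChain_nil, by simp⟩

@[simp] theorem Path.length_nil (v : G.V) : (Path.nil G v).length = 0 := rfl

/-- Prepend an edge to a path. -/
def Path.cons (e : G.E) (p : G.Path) (h : p.rng = G.s e) : G.Path where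
  src := p.src
  edges := e :: p.edges
  chain := by
    simp only [List.Chain']
    rw [List.isChain_cons]
    refine ⟨fun b hb => ?_, p.chain⟩
    rw [← h]
    simp [Path.rng, Option.mem_def.mp hb]
  srcEq := by
    intro a ha
    cases hp : p.edges with
    | nil =>
      rw [hp] at ha
      simp only [List.getLast?_singleton, Option.mem_def, Option.some.injEq] at ha
      subst ha
      have h0 : p.rng = p.src := by simp [Path.rng, hp]
      rw [← h, h0]
    | cons f t =>
      apply p.srcEq
      rw [hp]
      rw [hp, List.getLast?_cons_cons] at ha
      exact ha

@[simp] theorem Path.length_cons (e : G.E) (p : G.Path) (h : p.rng = G.s e) :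
    (Path.cons e p h).length = p.length + 1 := rfl

/-- Remove the first edge of a path. -/
def Path.tail (p : G.Path) : G.Path where
  src := p.src
  edges := p.edges.tail
  chain := p.chain.tail
  srcEq := by
    intro a ha
    apply p.srcEq
    cases hp : p.edges with
    | nil => rw [hp] at ha; simp at ha
    | cons f t =>
      rw [hp] at ha
      simp only [List.tail_cons] at ha
      cases t with
      | nil => simp at ha
      | cons g u => rw [List.getLast?_cons_cons]; exact ha

@[simp] theorem Path.length_tail (p : G.Path) : p.tail.length = p.length - 1 := by
  simp [Path.tail, Path.length]

/-- The initial segment of a path consisting of its first `k` edges. -/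
def Path.take (p : G.Path) (k : ℕ) : G.Path where
  src := (p.edges.drop k).head?.elim p.src G.r
  edges := p.edges.take k
  chain := p.chain.take k
  srcEq := by
    intro a ha
    have hc : List.Chain' (fun a b => G.s a = G.r b) (p.edges.take k ++ p.edges.drop k) := by
      rw [List.take_append_drop]; exact p.chain
    simp only [List.Chain'] at hc
    rw [List.isChain_append] at hc
    obtain ⟨-, -, hadj⟩ := hc
    cases hd : p.edges.drop k with
    | nil =>
      have htake : p.edges.take k = p.edges := by
        have h1 := List.take_append_drop k p.edges
        rw [hd, List.append_nil] at h1
        exact h1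
      simp only [List.head?_nil, Option.elim]
      exact p.srcEq a (htake ▸ ha)
    | cons f t =>
      simp only [List.head?_cons, Option.elim]
      exact hadj a ha f (by rw [hd]; simp)

/-- `[μ]_n` : the initial segment of `μ` of length `|μ| mod n`. -/
def Path.trunc (m : ℕ) (p : G.Path) : G.Path := p.take (p.length % m)

/-- Concatenation of paths, `p` followed after `q` (so `p.append q` has range the range of `p`
and source the source of `q`). -/
def Path.append (p q : G.Path) (h : p.src = q.rng) : G.Path where
  src := q.src
  edges := p.edges ++ q.edges
  chain := by
    simp only [List.Chain']
    rw [List.isChain_append]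
    refine ⟨p.chain, q.chain, fun a ha b hb => ?_⟩
    rw [p.srcEq a ha, h]
    simp [Path.rng, Option.mem_def.mp hb]
  srcEq := by
    intro a ha
    cases hq : q.edges with
    | nil =>
      rw [hq, List.append_nil] at ha
      have h0 : q.rng = q.src := by simp [Path.rng, hq]
      rw [p.srcEq a ha, h, h0]
    | cons f t =>
      apply q.srcEq
      rw [hq]
      rw [hq, List.getLast?_append_cons] at ha
      exact ha

/-- A graph is row-finite if every vertex receives finitely many edges. -/
def RowFinite (G : DGraph) : Prop := ∀ v : G.V, {e : G.E | G.r e = v}.Finite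

/-- A graph has no sources if every vertex receives an edge. -/
def NoSources (G : DGraph) : Prop := ∀ v : G.V, ∃ e : G.E, G.r e = v

/-- A graph is strongly connected if for all vertices `v, w` there is a path from `w` to `v`. -/
def StronglyConnected (G : DGraph) : Prop :=
  ∀ v w : G.V, ∃ p : G.Path, p.src = w ∧ p.rng = v

/-- The set of paths of length less than `n`. -/
abbrev PathLt (G : DGraph) (n : ℕ) := {p : G.Path // p.length < n}

/-- The graph `E(n)` of Kribs and Solel: vertices are paths of length `< n`, and edges
are pairs `(e, μ)` with `r(μ) = s(e)` and `|μ| < n`, with source `μ` and range `[eμ]_n`. -/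
def Eln (G : DGraph) (n : ℕ) : DGraph where
  V := PathLt G n
  E := {q : G.E × G.Path // q.2.length + 1 ≤ n ∧ q.2.rng = G.s q.1}
  s := fun q => ⟨q.1.2, Nat.lt_of_succ_le q.2.1⟩
  r := fun q =>
    if h : q.1.2.length + 1 < n then
      ⟨Path.cons q.1.1 q.1.2 q.2.2, by simpa using h⟩
    else
      ⟨Path.nil G (G.r q.1.1), Nat.lt_of_lt_of_le (Nat.succ_pos _) q.2.1⟩

/-- A vertex of `E`, regarded as a length-zero vertex of `E(n)`. -/
def vtx (G : DGraph) (n : ℕ) (hn : 0 < n) (v : G.V) : PathLt G n :=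
  ⟨Path.nil G v, by simpa using hn⟩

/-- `d` is the greatest common divisor of the set `S` of natural numbers. -/
def IsGCDOf (d : ℕ) (S : Set ℕ) : Prop :=
  (∀ k ∈ S, d ∣ k) ∧ ∀ c : ℕ, (∀ k ∈ S, c ∣ k) → c ∣ d

/-- The set of lengths of (nonempty) cycles of `G`. -/
def CycleLengths (G : DGraph) : Set ℕ :=
  {k | ∃ p : G.Path, p.rng = p.src ∧ p.edges ≠ [] ∧ p.length = k}

/-- The set of lengths of (nonempty) cycles of `G` based at `v`. -/
def CycleLengthsAt (G : DGraph) (v : G.V) : Set ℕ :=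
  {k | ∃ p : G.Path, p.src = v ∧ p.rng = v ∧ p.edges ≠ [] ∧ p.length = k}

/-- The relation `v ∼ w` iff there is a path from `w` to `v` whose length is divisible by `d`. -/
def SimRel (G : DGraph) (d : ℕ) (v w : G.V) : Prop :=
  ∃ p : G.Path, p.src = w ∧ p.rng = v ∧ d ∣ p.length

/-- The connected-component relation of a graph: the smallest equivalence relation
identifying the range and the source of each edge. -/
def Comp (G : DGraph) : G.V → G.V → Prop :=
  Relation.EqvGen (fun a b => ∃ f : G.E, G.r f = a ∧ G.s f = b)

/-- The adjacency matrix of `E(n)` acting on vectors indexed by `E^{<n}`. -/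
noncomputable def Aact (G : DGraph) (n : ℕ) (g : PathLt G n → ℝ) (v : PathLt G n) : ℝ :=
  ∑ᶠ (f : (Eln G n).E) (_ : (Eln G n).r f = v), g ((Eln G n).s f)

/-- The pushforward of a vector on `E^{<n}` along `ν ↦ [ν]_m`. -/
noncomputable def pushf (G : DGraph) (n m : ℕ) (g : PathLt G n → ℝ) (μ : PathLt G m) : ℝ :=
  ∑ᶠ (ν : PathLt G n) (_ : Path.trunc m ν.1 = μ.1), g ν

instance : TopologicalSpace G.Path := ⊥

/-- The inverse limit `lim← E^{<n_k}` along the truncation maps. -/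
def InvLim (G : DGraph) (n : ℕ → ℕ) : Type :=
  {f : (k : ℕ) → PathLt G (n k) // ∀ k, Path.trunc (n k) (f (k+1)).1 = (f k).1}

instance (G : DGraph) (n : ℕ → ℕ) : TopologicalSpace (InvLim G n) :=
  inferInstanceAs (TopologicalSpace
    {f : (k : ℕ) → PathLt G (n k) // ∀ k, Path.trunc (n k) (f (k+1)).1 = (f k).1})

noncomputable instance (G : DGraph) (n : ℕ → ℕ) : MeasurableSpace (InvLim G n) := borel _

end DGraph

open DGraph MeasureTheory

/-- The graph with one vertex and one loop. -/
def myG : DGraph where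
  V := Unit
  E := Unit
  r := fun _ => ()
  s := fun _ => ()

/-- paths in `myG` are determined by their length. -/
lemma myG_path_eq (p q : myG.Path) (h : p.edges.length = q.edges.length) : p = q := by
  obtain ⟨ps, pe, pc, pq⟩ := p
  obtain ⟨qs, qe, qc, qq⟩ := q
  have he : pe = qe :=
    List.ext_getElem h (fun n h1 h2 => Subsingleton.elim (α := Unit) _ _)
  subst he
  have hs : ps = qs := Subsingleton.elim (α := Unit) _ _
  subst hs
  rfl

/-- The path in `myG` with `j` edges. -/
def myPath (j : ℕ) : myG.Path :=
  ⟨(), List.replicate j (), by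
    induction j with
    | zero => exact List.isChain_nil
    | succ n ih => exact List.isChain_replicate_of_rel _ rfl, by intro a _; rfl⟩

@[simp] lemma myPath_length (j : ℕ) : (myPath j).length = j := by
  simp [myPath, DGraph.Path.length]
  exact List.length_replicate

def myPLt (n j : ℕ) (h : j < n) : PathLt myG n := ⟨myPath j, by simpa using h⟩

@[simp] lemma trunc_length (m : ℕ) (p : myG.Path) :
    (DGraph.Path.trunc m p).length = p.length % m := by
  have := Nat.mod_le p.edges.length m
  simp [DGraph.Path.trunc, DGraph.Path.take, DGraph.Path.length]
  omega

/-- the measure of the singleton `e^j` at level `k`. -/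
noncomputable def hh : ℕ → ℕ → ℝ
  | 0, _ => 1
  | (k+1), j => if j < 2^k then 2 * hh k j else -(hh k (j - 2^k))

lemma hh_zero (k : ℕ) : hh k 0 = 2^k := by
  induction k with
  | zero => simp [hh]
  | succ n ih =>
    have h : 0 < 2^n := Nat.pow_pos (by norm_num)
    simp [hh, h, ih]; ring

example : True := trivial


open DGraph MeasureTheory in
/-- For the graph with one vertex and one loop and the divisibility
sequence `n_k = 2^k`, the map `ι` of the previous statement is not surjective: there is a
compatible sequence of signed measures `(m_k)` with `m_k({v}) = 2^k` unbounded, hence not of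
the form `k ↦ (τ ↦ m(Z(τ,k)))` for any finite signed measure `m` on the inverse limit. -/
theorem iota_not_surjective :
    ∃ (G : DGraph) (_ : G.V) (_ : G.E) (g : (k : ℕ) → (PathLt G (2^k) → ℝ)),
      Subsingleton G.V ∧ Subsingleton G.E ∧
      (∀ k (τ : PathLt G (2^k)),
        ∑ᶠ (ν : PathLt G (2^(k+1))) (_ : Path.trunc (2^k) ν.1 = τ.1), g (k+1) ν = g k τ) ∧
      (∀ k (v : G.V), g k (vtx G (2^k) (Nat.pow_pos (by norm_num)) v) = 2^k) ∧
      ¬ ∃ m : SignedMeasure (InvLim G (fun k => 2^k)),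
          ∀ k (τ : PathLt G (2^k)),
            m {f : InvLim G (fun k => 2^k) | f.1 k = τ} = g k τ := by
  refine ⟨myG, (), (), fun k τ => hh k τ.1.length,
    ⟨fun a b => Subsingleton.elim (α := Unit) a b⟩,
    ⟨fun a b => Subsingleton.elim (α := Unit) a b⟩, ?_, ?_, ?_⟩
  · intro k τ
    have hj : τ.1.length < 2^k := τ.2
    set j := τ.1.length with hjdef
    have hjlt : j < 2^(k+1) := by
      have : (2:ℕ)^k ≤ 2^(k+1) := Nat.pow_le_pow_right (by norm_num) (by omega)
      omega
    have hjlt2 : j + 2^k < 2^(k+1) := by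
      have : (2:ℕ)^(k+1) = 2^k + 2^k := by ring
      omega
    set ν1 : PathLt myG (2^(k+1)) := myPLt _ j hjlt with hν1
    set ν2 : PathLt myG (2^(k+1)) := myPLt _ (j + 2^k) hjlt2 with hν2
    have hpair : {ν : PathLt myG (2^(k+1)) | Path.trunc (2^k) ν.1 = τ.1}
        = {ν1, ν2} := by
      ext ν
      simp only [Set.mem_setOf_eq, Set.mem_insert_iff, Set.mem_singleton_iff]
      constructor
      · intro h
        have hlen : ν.1.length % 2^k = j := by
          have := congrArg Path.length h
          simpa using this
        have hlt : ν.1.length < 2^(k+1) := ν.2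
        have hcase : ν.1.length = j ∨ ν.1.length = j + 2^k := by
          rcases lt_or_ge ν.1.length (2^k) with h1 | h1
          · left; rwa [Nat.mod_eq_of_lt h1] at hlen
          · right
            have h2 : ν.1.length - 2^k < 2^k := by
              have : (2:ℕ)^(k+1) = 2^k + 2^k := by ring
              omega
            rw [Nat.mod_eq_sub_mod h1, Nat.mod_eq_of_lt h2] at hlen
            omega
        rcases hcase with h' | h'
        · left
          exact Subtype.ext (myG_path_eq _ _
            (by simp only [hν1, myPLt, myPath, List.length_replicate]; exact h'.trans List.length_replicate.symm))
        · right
          exact Subtype.ext (myG_path_eq _ _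
            (by simp only [hν2, myPLt, myPath, List.length_replicate]; exact h'.trans List.length_replicate.symm))
      · rintro (rfl | rfl)
        · refine myG_path_eq _ _ ?_
          show (Path.trunc (2^k) (myPath j)).length = τ.1.length
          rw [trunc_length, myPath_length, Nat.mod_eq_of_lt hj]
        · refine myG_path_eq _ _ ?_
          show (Path.trunc (2^k) (myPath (j + 2^k))).length = τ.1.length
          rw [trunc_length, myPath_length, Nat.add_mod_right, Nat.mod_eq_of_lt hj]
    have hne : ν1 ≠ ν2 := by
      intro h
      have := congrArg (fun x : PathLt myG (2^(k+1)) => x.1.length) h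
      simp only [hν1, hν2, myPLt, myPath_length] at this
      have h0 : 0 < (2:ℕ)^k := Nat.pow_pos (by norm_num)
      omega
    have key := finsum_mem_pair
      (f := fun ν : PathLt myG (2^(k+1)) => hh (k+1) ν.1.length) hne
    rw [← hpair] at key
    simp only [Set.mem_setOf_eq] at key
    rw [key]
    show hh (k+1) (myPath j).length + hh (k+1) (myPath (j + 2^k)).length = hh k j
    rw [myPath_length, myPath_length]
    have h1 : hh (k+1) j = 2 * hh k j := by simp [hh, hj]
    have h2 : hh (k+1) (j + 2^k) = -(hh k j) := by
      have : ¬ (j + 2^k < 2^k) := by omega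
      simp [hh, this]
    rw [h1, h2]; ring
  · intro k v
    show hh k (Path.nil myG ()).length = (2:ℝ)^k
    have : (Path.nil myG ()).length = 0 := rfl
    rw [this, hh_zero]
  · rintro ⟨m, hm⟩
    set J := m.toJordanDecomposition with hJ
    obtain ⟨k, hk⟩ := exists_nat_gt ((J.posPart Set.univ).toReal)
    have h2k : ((J.posPart Set.univ).toReal) < (2:ℝ)^k := by
      refine lt_of_lt_of_le hk ?_
      exact_mod_cast (Nat.lt_two_pow_self (n := k)).le
    set τ : PathLt myG (2^k) := vtx myG (2^k) (Nat.pow_pos (by norm_num)) ()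
    set s := {f : InvLim myG (fun k => 2^k) | f.1 k = τ} with hs
    have hval : m s = (2:ℝ)^k := by
      rw [hm k τ]
      show hh k (Path.nil myG ()).length = (2:ℝ)^k
      have : (Path.nil myG ()).length = 0 := rfl
      rw [this, hh_zero]
    have hbound : m s ≤ (J.posPart Set.univ).toReal := by
      by_cases hms : MeasurableSet s
      · have h1 : m s = (J.posPart s).toReal - (J.negPart s).toReal := by
          conv_lhs => rw [← m.toSignedMeasure_toJordanDecomposition]
          rw [JordanDecomposition.toSignedMeasure]
          exact Measure.toSignedMeasure_sub_apply hms
        rw [h1]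
        have h2 : (J.posPart s).toReal ≤ (J.posPart Set.univ).toReal :=
          ENNReal.toReal_mono (measure_ne_top _ _) (measure_mono (Set.subset_univ s))
        have h3 : 0 ≤ (J.negPart s).toReal := ENNReal.toReal_nonneg
        linarith
      · rw [m.not_measurable hms]
        positivity
    rw [hval] at hbound
    linarith
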